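/- Let E be a complex inner product space and let x, y, z ∈ E be nonzero vectors. The Cayley distance satisfies the triangle inequality: arccos(|⟨x, z⟩| / (‖x‖ · ‖z‖)) ≤ arccos(|⟨x, y⟩| / (‖x‖ · ‖y‖)) + arccos(|⟨y, z⟩| / (‖y‖ · ‖z‖)). Together with symmetry and the vanishing characterization, this makes d_c a metric on the projective space P(E). -/

import Mathlib

open scoped InnerProductSpace

open Real

lemma my_arccos_le_arccos {x y : ℝ} (h : x ≤ y) : arccos y ≤ arccos x := by
  simp only [Real.arccos]
  linarith [monotone_arcsin h]

lemma arccos_triangle_aux {a b c : ℝ} (ha0 : 0 ≤ a) (ha1 : a ≤ 1)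
    (hb0 : 0 ≤ b) (hb1 : b ≤ 1)
    (h : a * b - Real.sqrt (1 - a^2) * Real.sqrt (1 - b^2) ≤ c) :
    Real.arccos c ≤ Real.arccos a + Real.arccos b := by
  have hS0 : 0 ≤ arccos a + arccos b := add_nonneg (arccos_nonneg a) (arccos_nonneg b)
  have hSpi : arccos a + arccos b ≤ π := by
    have h1 := arccos_le_pi_div_two.2 ha0
    have h2 := arccos_le_pi_div_two.2 hb0
    linarith
  have hcos : Real.cos (arccos a + arccos b) = a * b - Real.sqrt (1 - a^2) * Real.sqrt (1 - b^2) := by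
    rw [Real.cos_add, Real.cos_arccos (by linarith) ha1, Real.cos_arccos (by linarith) hb1,
      Real.sin_arccos, Real.sin_arccos]
  calc arccos c ≤ arccos (Real.cos (arccos a + arccos b)) :=
        my_arccos_le_arccos (by rw [hcos]; exact h)
    _ = arccos a + arccos b := arccos_cos hS0 hSpi
open scoped InnerProductSpace
open Real

lemma inner_mul_inner_symm {E : Type*} [NormedAddCommGroup E] [InnerProductSpace ℂ E]
    (x y : E) : ⟪x, y⟫_ℂ * ⟪y, x⟫_ℂ = (‖⟪x, y⟫_ℂ‖ ^ 2 : ℝ) := by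
  calc ⟪x, y⟫_ℂ * ⟪y, x⟫_ℂ = ⟪x, y⟫_ℂ * (starRingEnd ℂ) ⟪x, y⟫_ℂ := by rw [inner_conj_symm]
    _ = (Complex.normSq ⟪x, y⟫_ℂ : ℝ) := Complex.mul_conj _
    _ = (‖⟪x, y⟫_ℂ‖ ^ 2 : ℝ) := by rw [Complex.normSq_eq_norm_sq]

lemma cayley_key {E : Type*} [NormedAddCommGroup E] [InnerProductSpace ℂ E]
    (x y z : E) (hx : ‖x‖ = 1) (hy : ‖y‖ = 1) (hz : ‖z‖ = 1) :
    ‖⟪x, y⟫_ℂ‖ * ‖⟪y, z⟫_ℂ‖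
      - Real.sqrt (1 - ‖⟪x, y⟫_ℂ‖ ^ 2) * Real.sqrt (1 - ‖⟪y, z⟫_ℂ‖ ^ 2)
      ≤ ‖⟪x, z⟫_ℂ‖ := by
  set u : E := x - ⟪y, x⟫_ℂ • y with hu
  set v : E := z - ⟪y, z⟫_ℂ • y with hv
  have hyy : ⟪y, y⟫_ℂ = 1 := by rw [inner_self_eq_norm_sq_to_K, hy]; norm_num
  have hxx : ⟪x, x⟫_ℂ = 1 := by rw [inner_self_eq_norm_sq_to_K, hx]; norm_num
  have hzz : ⟪z, z⟫_ℂ = 1 := by rw [inner_self_eq_norm_sq_to_K, hz]; norm_num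
  have huv : ⟪u, v⟫_ℂ = ⟪x, z⟫_ℂ - ⟪x, y⟫_ℂ * ⟪y, z⟫_ℂ := by
    simp [hu, hv, inner_sub_left, inner_sub_right, inner_smul_left, inner_smul_right, hyy,
      inner_conj_symm, hy, mul_comm]
  have hnorm : ∀ w : E, ⟪w, w⟫_ℂ = 1 → ∀ p : E, p = w - ⟪y, w⟫_ℂ • y →
      ‖p‖ ^ 2 = 1 - ‖⟪w, y⟫_ℂ‖ ^ 2 := by
    intro w hww p hp
    have h1 : ⟪p, p⟫_ℂ = 1 - (‖⟪w, y⟫_ℂ‖ ^ 2 : ℝ) := by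
      rw [hp]
      simp [inner_sub_left, inner_sub_right, inner_smul_left, inner_smul_right, hyy,
        inner_conj_symm, hww, -inner_self_eq_norm_sq_to_K]
      rw [inner_mul_inner_symm]
      push_cast
      rw [norm_inner_symm y w]
    have h2 := inner_self_eq_norm_sq (𝕜 := ℂ) p
    rw [h1] at h2
    rw [← h2]
    norm_cast
  have hnu : ‖u‖ ^ 2 = 1 - ‖⟪x, y⟫_ℂ‖ ^ 2 := hnorm x hxx u hu
  have hnv : ‖v‖ ^ 2 = 1 - ‖⟪z, y⟫_ℂ‖ ^ 2 := hnorm z hzz v hv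
  have hzy : ‖⟪z, y⟫_ℂ‖ = ‖⟪y, z⟫_ℂ‖ := by
    rw [← inner_conj_symm y z, Complex.norm_conj]
  rw [hzy] at hnv
  have hru : Real.sqrt (1 - ‖⟪x, y⟫_ℂ‖ ^ 2) = ‖u‖ := by
    rw [← hnu, Real.sqrt_sq (norm_nonneg u)]
  have hrv : Real.sqrt (1 - ‖⟪y, z⟫_ℂ‖ ^ 2) = ‖v‖ := by
    rw [← hnv, Real.sqrt_sq (norm_nonneg v)]
  have hcs : ‖⟪u, v⟫_ℂ‖ ≤ ‖u‖ * ‖v‖ := by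
    exact norm_inner_le_norm u v
  have h3 : ‖⟪x, y⟫_ℂ‖ * ‖⟪y, z⟫_ℂ‖
      ≤ ‖⟪x, z⟫_ℂ‖ + ‖⟪u, v⟫_ℂ‖ := by
    calc ‖⟪x, y⟫_ℂ‖ * ‖⟪y, z⟫_ℂ‖
        = ‖⟪x, y⟫_ℂ * ⟪y, z⟫_ℂ‖ := (norm_mul _ _).symm
      _ = ‖⟪x, z⟫_ℂ - ⟪u, v⟫_ℂ‖ := by rw [huv]; ring_nf
      _ ≤ ‖⟪x, z⟫_ℂ‖ + ‖⟪u, v⟫_ℂ‖ := by exact norm_sub_le _ _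
  rw [hru, hrv]
  linarith

lemma cayley_unit {E : Type*} [NormedAddCommGroup E] [InnerProductSpace ℂ E]
    (x y z : E) (hx : ‖x‖ = 1) (hy : ‖y‖ = 1) (hz : ‖z‖ = 1) :
    Real.arccos (‖⟪x, z⟫_ℂ‖) ≤
      Real.arccos (‖⟪x, y⟫_ℂ‖) + Real.arccos (‖⟪y, z⟫_ℂ‖) := by
  have hb : ∀ p q : E, ‖p‖ = 1 → ‖q‖ = 1 → ‖⟪p, q⟫_ℂ‖ ≤ 1 := by
    intro p q hp hq
    have := norm_inner_le_norm (𝕜 := ℂ) p q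
    rw [hp, hq] at this
    simpa using this
  exact arccos_triangle_aux (norm_nonneg _) (hb x y hx hy)
    (norm_nonneg _) (hb y z hy hz) (cayley_key x y z hx hy hz)


/-- The Cayley distance satisfies the triangle inequality on nonzero vectors
(and hence, together with symmetry and the vanishing characterization, defines
a metric on the projective space `P(E)`). -/
theorem cayley_distance_triangle
    {E : Type*} [NormedAddCommGroup E] [InnerProductSpace ℂ E]
    (x y z : E) (hx : x ≠ 0) (hy : y ≠ 0) (hz : z ≠ 0) :
    Real.arccos (‖⟪x, z⟫_ℂ‖ / (‖x‖ * ‖z‖)) ≤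
      Real.arccos (‖⟪x, y⟫_ℂ‖ / (‖x‖ * ‖y‖)) +
        Real.arccos (‖⟪y, z⟫_ℂ‖ / (‖y‖ * ‖z‖)) := by
  have hn : ∀ p : E, p ≠ 0 → ‖(‖p‖ : ℂ)⁻¹ • p‖ = 1 := by
    intro p hp
    have h0 : ‖p‖ ≠ 0 := norm_ne_zero_iff.2 hp
    rw [norm_smul, norm_inv, Complex.norm_real, norm_norm]
    field_simp
  have e : ∀ p q : E, p ≠ 0 → q ≠ 0 →
      ‖⟪(‖p‖ : ℂ)⁻¹ • p, (‖q‖ : ℂ)⁻¹ • q⟫_ℂ‖ =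
        ‖⟪p, q⟫_ℂ‖ / (‖p‖ * ‖q‖) := by
    intro p q hp hq
    rw [inner_smul_left, inner_smul_right]
    simp only [norm_mul, norm_inv, Complex.norm_conj, Complex.norm_real, norm_norm]
    rw [div_eq_mul_inv, mul_inv]
    ring
  have key := cayley_unit ((‖x‖ : ℂ)⁻¹ • x) ((‖y‖ : ℂ)⁻¹ • y) ((‖z‖ : ℂ)⁻¹ • z)
    (hn x hx) (hn y hy) (hn z hz)
  rw [e x z hx hz, e x y hx hy, e y z hy hz] at key
  exact key
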